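/- Doob optional sampling, discrete case: let t_1 < … < t_N be indices with a filtration of conditional expectations (E_{t_i}) on E (E_{t_i}E_{t_j} = E_{t_i} for i ≤ j), (X_{t_i}) a submartingale (X_{t_i} ∈ range(E_{t_i}) and E_{t_i}(X_{t_j}) ≥ X_{t_i} for i ≤ j), and let (ΔS_i), (ΔT_j) be two finite systems of pairwise disjoint band projections summing to the identity such that ΔS_i commutes with E_{t_i} for all i, ΔT_j commutes with E_{t_j} for all j, and ΔT_j ΔS_i = 0 whenever j < i. Define X_S = Σ_i ΔS_i X_{t_i}, X_T = Σ_j ΔT_j X_{t_j}, and E_S = Σ_i E_{t_i} ΔS_i. Then E_S(X_T) ≥ X_S. -/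

import Mathlib

variable {E : Type*} [AddCommGroup E] [Lattice E]
  [CovariantClass E E (· + ·) (· ≤ ·)] [Module ℝ E]

/-- `E` is Dedekind complete. -/
def DedekindComplete (E : Type*) [AddCommGroup E] [Lattice E] : Prop :=
  ∀ A : Set E, A.Nonempty → BddAbove A → ∃ s, IsLUB A s

/-- `e` is a weak order unit. -/
def IsWeakUnit (e : E) : Prop :=
  0 < e ∧ ∀ x : E, 0 ≤ x → IsLUB (Set.range fun n : ℕ => x ⊓ n • e) x

/-- A band (order) projection. -/
def IsBandProj (P : E →ₗ[ℝ] E) : Prop :=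
  (∀ x, P (P x) = P x) ∧ ∀ x : E, 0 ≤ x → 0 ≤ P x ∧ P x ≤ x

/-- A conditional expectation with respect to the weak order unit `e`. -/
def IsCondExp (e : E) (F : E →ₗ[ℝ] E) : Prop :=
  (∀ x, F (F x) = F x) ∧ (∀ x : E, 0 < x → 0 < F x) ∧ F e = e ∧
  ∀ V : ℕ → E, Antitone V → IsGLB (Set.range V) 0 →
    IsGLB (Set.range fun n => F (V n)) 0

lemma aux_inf_add_right (a b c : E) : (a ⊓ b) + c = (a + c) ⊓ (b + c) := by
  apply le_antisymm
  · exact le_inf (add_le_add_left inf_le_left c) (add_le_add_left inf_le_right c)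
  · rw [← sub_le_iff_le_add]
    exact le_inf (sub_le_iff_le_add.mpr inf_le_left) (sub_le_iff_le_add.mpr inf_le_right)

lemma aux_inf_add (a b c : E) (ha : 0 ≤ a) (hb : 0 ≤ b) (hc : 0 ≤ c) :
    a ⊓ (b + c) ≤ a ⊓ b + a ⊓ c := by
  have h1 : a ⊓ (b + c) ≤ a ⊓ b + c := by
    rw [aux_inf_add_right]
    exact inf_le_inf_right (b + c) (le_add_of_nonneg_right hc)
  have h2 : a ⊓ (b + c) ≤ a ⊓ b + a := by
    calc a ⊓ (b + c) ≤ a := inf_le_left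
    _ ≤ a ⊓ b + a := le_add_of_nonneg_left (le_inf ha hb)
  rw [← sub_le_iff_le_add'] at h1 h2 ⊢
  exact le_inf h2 h1

lemma aux_disjoint_nsmul (a b : E) (ha : 0 ≤ a) (hb : 0 ≤ b) (h : a ⊓ b = 0) (n : ℕ) :
    a ⊓ n • b = 0 := by
  induction n with
  | zero => rw [zero_nsmul]; exact inf_eq_right.mpr ha
  | succ n ih =>
    apply le_antisymm
    · calc a ⊓ (n + 1) • b = a ⊓ (n • b + b) := by rw [succ_nsmul]
      _ ≤ a ⊓ n • b + a ⊓ b := aux_inf_add a (n • b) b ha (nsmul_nonneg hb n) hb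
      _ = 0 := by rw [ih, h, add_zero]
    · exact le_inf ha (nsmul_nonneg hb (n + 1))

lemma aux_sum_le_sum {ι : Type*} (s : Finset ι) (f g : ι → E) (h : ∀ i ∈ s, f i ≤ g i) :
    ∑ i ∈ s, f i ≤ ∑ i ∈ s, g i := by
  classical
  induction s using Finset.induction_on with
  | empty => simp
  | insert _ _ hx ih =>
    rw [Finset.sum_insert hx, Finset.sum_insert hx]
    exact add_le_add (h _ (Finset.mem_insert_self _ _))
      (ih fun i hi => h i (Finset.mem_insert_of_mem hi))

lemma aux_sum_nonneg {ι : Type*} (s : Finset ι) (f : ι → E) (h : ∀ i ∈ s, 0 ≤ f i) :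
    0 ≤ ∑ i ∈ s, f i := by
  have := aux_sum_le_sum s (fun _ => (0:E)) f h
  simpa using this

section BandProj
variable {P Q : E →ₗ[ℝ] E} {e : E}

lemma bp_pos (hP : IsBandProj P) {x : E} (hx : 0 ≤ x) : 0 ≤ P x := (hP.2 x hx).1

lemma bp_le (hP : IsBandProj P) {x : E} (hx : 0 ≤ x) : P x ≤ x := (hP.2 x hx).2

lemma bp_mono (hP : IsBandProj P) {x y : E} (h : x ≤ y) : P x ≤ P y := by
  have := bp_pos hP (sub_nonneg.mpr h)
  rw [map_sub] at this
  exact sub_nonneg.mp this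

lemma bp_compl (hP : IsBandProj P) : IsBandProj (LinearMap.id - P) := by
  constructor
  · intro x
    simp only [LinearMap.sub_apply, LinearMap.id_apply, map_sub, hP.1 x]
    abel
  · intro x hx
    simp only [LinearMap.sub_apply, LinearMap.id_apply]
    exact ⟨sub_nonneg.mpr (bp_le hP hx), sub_le_self x (bp_pos hP hx)⟩

lemma bp_disj (hP : IsBandProj P) {x w : E} (hx : 0 ≤ x) (hw : 0 ≤ w) :
    P x ⊓ (w - P w) = 0 := by
  set y := P x ⊓ (w - P w) with hy
  have hy0 : 0 ≤ y := le_inf (bp_pos hP hx) (sub_nonneg.mpr (bp_le hP hw))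
  have h1 : P y ≤ 0 := by
    have := bp_mono hP (inf_le_right : y ≤ w - P w)
    rwa [map_sub, hP.1 w, sub_self] at this
  have h2 : y - P y ≤ 0 := by
    have := bp_mono (bp_compl hP) (inf_le_left : y ≤ P x)
    simpa only [LinearMap.sub_apply, LinearMap.id_apply, hP.1 x, sub_self] using this
  have : y ≤ 0 := by
    have := add_le_add h1 h2
    rwa [add_sub_cancel, add_zero] at this
  exact le_antisymm this hy0

lemma bp_disj' (hP : IsBandProj P) {x w : E} (hx : 0 ≤ x) (hw : 0 ≤ w) :
    (x - P x) ⊓ P w = 0 := by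
  have := bp_disj (bp_compl hP) hx hw
  simpa only [LinearMap.sub_apply, LinearMap.id_apply, sub_sub_cancel] using this

lemma bp_isLUB (he : IsWeakUnit e) (hP : IsBandProj P) {x : E} (hx : 0 ≤ x) :
    IsLUB (Set.range fun n : ℕ => x ⊓ n • P e) (P x) := by
  have hPe : 0 ≤ P e := bp_pos hP he.1.le
  have hxP : (x - P x) ⊓ P e = 0 := bp_disj' hP hx he.1.le
  constructor
  · rintro _ ⟨n, rfl⟩
    have hz : (x - P x) ⊓ n • P e = 0 :=
      aux_disjoint_nsmul _ _ (sub_nonneg.mpr (bp_le hP hx)) hPe hxP n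
    have hsplit : x ⊓ n • P e ≤ P x ⊓ n • P e + (x - P x) ⊓ n • P e := by
      have hx' : x = P x + (x - P x) := by abel
      calc x ⊓ n • P e = (n • P e) ⊓ (P x + (x - P x)) := by rw [← hx', inf_comm]
      _ ≤ (n • P e) ⊓ P x + (n • P e) ⊓ (x - P x) :=
          aux_inf_add _ _ _ (nsmul_nonneg hPe n) (bp_pos hP hx)
            (sub_nonneg.mpr (bp_le hP hx))
      _ = P x ⊓ n • P e + (x - P x) ⊓ n • P e := by rw [inf_comm (n • P e), inf_comm (n • P e)]
    calc x ⊓ n • P e ≤ P x ⊓ n • P e + (x - P x) ⊓ n • P e := hsplit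
    _ = P x ⊓ n • P e := by rw [hz, add_zero]
    _ ≤ P x := inf_le_left
  · intro b hb
    have hPx0 : 0 ≤ P x := bp_pos hP hx
    have hdisj : P x ⊓ (e - P e) = 0 := bp_disj hP hx he.1.le
    refine (he.2 (P x) hPx0).2 ?_
    rintro _ ⟨n, rfl⟩
    have hed : n • e = n • P e + n • (e - P e) := by rw [← smul_add, add_sub_cancel]
    calc P x ⊓ n • e = P x ⊓ (n • P e + n • (e - P e)) := by rw [hed]
    _ ≤ P x ⊓ n • P e + P x ⊓ n • (e - P e) :=
        aux_inf_add _ _ _ hPx0 (nsmul_nonneg hPe n)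
          (nsmul_nonneg (sub_nonneg.mpr (bp_le hP he.1.le)) n)
    _ = P x ⊓ n • P e := by
        rw [aux_disjoint_nsmul _ _ hPx0 (sub_nonneg.mpr (bp_le hP he.1.le)) hdisj n, add_zero]
    _ ≤ x ⊓ n • P e := inf_le_inf_right _ (bp_le hP hx)
    _ ≤ b := hb ⟨n, rfl⟩

lemma bp_zero (he : IsWeakUnit e) (hP : IsBandProj P) {z : E} (hz : 0 ≤ z)
    (hd : z ⊓ P e = 0) : P z = 0 := by
  have h := bp_isLUB he hP hz
  refine le_antisymm (h.2 ?_) (bp_pos hP hz)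
  rintro _ ⟨n, rfl⟩
  simpa using (aux_disjoint_nsmul _ _ hz (bp_pos hP he.1.le) hd n).le

lemma bp_fix (he : IsWeakUnit e) (hP : IsBandProj P) {z : E} (hz : 0 ≤ z)
    (hd : z ⊓ (e - P e) = 0) : P z = z := by
  refine le_antisymm (bp_le hP hz) ((he.2 z hz).2 ?_)
  rintro _ ⟨n, rfl⟩
  have hPe : 0 ≤ P e := bp_pos hP he.1.le
  have hePe : 0 ≤ e - P e := sub_nonneg.mpr (bp_le hP he.1.le)
  have hed : n • e = n • P e + n • (e - P e) := by rw [← smul_add, add_sub_cancel]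
  calc z ⊓ n • e = z ⊓ (n • P e + n • (e - P e)) := by rw [hed]
  _ ≤ z ⊓ n • P e + z ⊓ n • (e - P e) :=
      aux_inf_add _ _ _ hz (nsmul_nonneg hPe n) (nsmul_nonneg hePe n)
  _ = z ⊓ n • P e := by rw [aux_disjoint_nsmul _ _ hz hePe hd n, add_zero]
  _ ≤ P z := (bp_isLUB he hP hz).1 ⟨n, rfl⟩

lemma bp_comm (he : IsWeakUnit e) (hP : IsBandProj P) (hQ : IsBandProj Q) (x : E) :
    P (Q x) = Q (P x) := by
  have key : ∀ x : E, 0 ≤ x → P (Q x) = Q (P x) := by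
    intro x hx
    have hPx0 : 0 ≤ P x := bp_pos hP hx
    have hxPx0 : 0 ≤ x - P x := sub_nonneg.mpr (bp_le hP hx)
    have h1 : P (Q (P x)) = Q (P x) := by
      apply bp_fix he hP (bp_pos hQ hPx0)
      apply le_antisymm _ (le_inf (bp_pos hQ hPx0) (sub_nonneg.mpr (bp_le hP he.1.le)))
      calc Q (P x) ⊓ (e - P e) ≤ P x ⊓ (e - P e) := inf_le_inf_right _ (bp_le hQ hPx0)
      _ = 0 := bp_disj hP hx he.1.le
    have h2 : P (Q (x - P x)) = 0 := by
      apply bp_zero he hP (bp_pos hQ hxPx0)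
      apply le_antisymm _ (le_inf (bp_pos hQ hxPx0) (bp_pos hP he.1.le))
      calc Q (x - P x) ⊓ P e ≤ (x - P x) ⊓ P e := inf_le_inf_right _ (bp_le hQ hxPx0)
      _ = 0 := bp_disj' hP hx he.1.le
    have hsplit : Q x = Q (P x) + Q (x - P x) := by rw [← map_add]; congr 1; abel
    rw [hsplit, map_add, h1, h2, add_zero]
  have hd : x = x⁺ - x⁻ := (posPart_sub_negPart x).symm
  rw [hd]
  simp only [map_sub, key x⁺ (posPart_nonneg x), key x⁻ (negPart_nonneg x)]

end BandProj

section CondExp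
variable {F P : E →ₗ[ℝ] E} {e : E}

lemma ce_pos (hF : IsCondExp e F) {x : E} (hx : 0 ≤ x) : 0 ≤ F x := by
  rcases hx.eq_or_lt with h | h
  · rw [← h, map_zero]
  · exact (hF.2.1 x h).le

lemma ce_mono (hF : IsCondExp e F) {x y : E} (h : x ≤ y) : F x ≤ F y := by
  have := ce_pos hF (sub_nonneg.mpr h)
  rw [map_sub] at this
  exact sub_nonneg.mp this

lemma ce_bp_le (he : IsWeakUnit e) (hF : IsCondExp e F) (hP : IsBandProj P)
    (hfix : F (P e) = P e) {x : E} (hx : 0 ≤ x) : F (P x) ≤ P (F x) := by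
  have hu : 0 ≤ P e := bp_pos hP he.1.le
  have hlubP := bp_isLUB he hP hx
  set V : ℕ → E := fun n => P x - x ⊓ n • P e with hV
  have hVanti : Antitone V := by
    intro n m hnm
    exact sub_le_sub_left (inf_le_inf_left x (nsmul_le_nsmul_left hu hnm)) (P x)
  have hVglb : IsGLB (Set.range V) 0 := by
    constructor
    · rintro _ ⟨n, rfl⟩
      exact sub_nonneg.mpr (hlubP.1 ⟨n, rfl⟩)
    · intro c hc
      have h1 : ∀ n : ℕ, x ⊓ n • P e ≤ P x - c := by
        intro n
        have := hc ⟨n, rfl⟩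
        simp only [hV] at this
        have := sub_le_sub_left this (P x)
        simpa using this
      have h2 : P x ≤ P x - c := hlubP.2 (by rintro _ ⟨n, rfl⟩; exact h1 n)
      have := sub_le_sub_left h2 (P x)
      simpa using this
  have hFV := hF.2.2.2 V hVanti hVglb
  have hb : ∀ n : ℕ, F x ⊓ n • P e ≤ P (F x) := fun n =>
    (bp_isLUB he hP (ce_pos hF hx)).1 ⟨n, rfl⟩
  have hlow : F (P x) - P (F x) ∈ lowerBounds (Set.range fun n => F (V n)) := by
    rintro _ ⟨n, rfl⟩
    have h1 : F (x ⊓ n • P e) ≤ F x ⊓ n • P e := by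
      refine le_inf (ce_mono hF inf_le_left) ?_
      calc F (x ⊓ n • P e) ≤ F (n • P e) := ce_mono hF inf_le_right
      _ = n • F (P e) := map_nsmul F n (P e)
      _ = n • P e := by rw [hfix]
    calc F (P x) - P (F x) ≤ F (P x) - (F x ⊓ n • P e) := sub_le_sub_left (hb n) _
    _ ≤ F (P x) - F (x ⊓ n • P e) := sub_le_sub_left h1 _
    _ = F (V n) := by rw [hV]; simp [map_sub]
  have := hFV.2 hlow
  exact sub_nonpos.mp this

lemma ce_bp_comm (he : IsWeakUnit e) (hF : IsCondExp e F) (hP : IsBandProj P)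
    (hfix : F (P e) = P e) (x : E) : F (P x) = P (F x) := by
  have key : ∀ x : E, 0 ≤ x → F (P x) = P (F x) := by
    intro x hx
    have h1 := ce_bp_le he hF hP hfix hx
    have hQ := bp_compl hP
    have hfixQ : F ((LinearMap.id - P : E →ₗ[ℝ] E) e) = (LinearMap.id - P : E →ₗ[ℝ] E) e := by
      simp only [LinearMap.sub_apply, LinearMap.id_apply, map_sub, hF.2.2.1, hfix]
    have h2 := ce_bp_le he hF hQ hfixQ hx
    simp only [LinearMap.sub_apply, LinearMap.id_apply, map_sub] at h2
    -- h2 : F x - F (P x) ≤ F x - P (F x)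
    have h3 : P (F x) ≤ F (P x) := by
      have := sub_le_sub_left h2 (F x)
      simpa using this
    exact le_antisymm h1 h3
  have hd : x = x⁺ - x⁻ := (posPart_sub_negPart x).symm
  rw [hd]
  simp only [map_sub, key x⁺ (posPart_nonneg x), key x⁻ (negPart_nonneg x)]

end CondExp

/-- Doob's optional sampling theorem, discrete case: for a finite filtration
`(Et i)`, a submartingale `(X i)`, and simple stopping times `S ≤ T` encoded by the
pairwise disjoint band projections `(ΔS i)` and `(ΔT j)` summing to the identity
(with `ΔT j ∘ ΔS i = 0` for `j < i`), one has `E_S(X_T) ≥ X_S`. -/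
theorem doob_optional_sampling_discrete
    (hE : DedekindComplete E) (e : E) (he : IsWeakUnit e)
    (N : ℕ) (Et : Fin N → (E →ₗ[ℝ] E))
    (hEt : ∀ i, IsCondExp e (Et i))
    (hfiltr : ∀ i j : Fin N, i ≤ j → ∀ x : E,
      Et i (Et j x) = Et i x ∧ Et j (Et i x) = Et i x)
    (X : Fin N → E)
    (hadapt : ∀ i, Et i (X i) = X i)
    (hsubmart : ∀ i j : Fin N, i ≤ j → X i ≤ Et i (X j))
    (ΔS ΔT : Fin N → (E →ₗ[ℝ] E))
    (hΔS : ∀ i, IsBandProj (ΔS i)) (hΔT : ∀ j, IsBandProj (ΔT j))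
    (hSdisj : ∀ i j, i ≠ j → ∀ x : E, ΔS i (ΔS j x) = 0)
    (hTdisj : ∀ i j, i ≠ j → ∀ x : E, ΔT i (ΔT j x) = 0)
    (hSsum : ∀ x : E, ∑ i, ΔS i x = x)
    (hTsum : ∀ x : E, ∑ j, ΔT j x = x)
    (hScomm : ∀ i, ∀ x : E, ΔS i (Et i x) = Et i (ΔS i x))
    (hTcomm : ∀ j, ∀ x : E, ΔT j (Et j x) = Et j (ΔT j x))
    (hST : ∀ i j : Fin N, j < i → ∀ x : E, ΔT j (ΔS i x) = 0) :
    ∑ i, ΔS i (X i) ≤ ∑ i, Et i (ΔS i (∑ j, ΔT j (X j))) := by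
  classical
  -- splitting sums at an index
  have hIioIci : ∀ (k : Fin N) (f : Fin N → E),
      ∑ j ∈ Finset.Iio k, f j + ∑ j ∈ Finset.Ici k, f j = ∑ j, f j := by
    intro k f
    have hcompl : (Finset.Iio k)ᶜ = Finset.Ici k := by
      ext j; simp [not_lt]
    rw [← hcompl]
    exact Finset.sum_add_sum_compl _ _
  -- ΔT j commutes with Et k for j ≤ k
  have hTEt : ∀ (j k : Fin N), j ≤ k → ∀ x : E, Et k (ΔT j x) = ΔT j (Et k x) := by
    intro j k hjk x
    have h1 : Et j (ΔT j e) = ΔT j e := by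
      have h := hTcomm j e
      rw [(hEt j).2.2.1] at h
      exact h.symm
    have hfix : Et k (ΔT j e) = ΔT j e := by
      calc Et k (ΔT j e) = Et k (Et j (ΔT j e)) := by rw [h1]
      _ = Et j (ΔT j e) := (hfiltr j k hjk _).2
      _ = ΔT j e := h1
    exact ce_bp_comm he (hEt k) (hΔT j) hfix x
  -- the key downward induction
  have claim : ∀ (m : ℕ) (k : Fin N), (k : ℕ) + m + 1 = N →
      X k - ∑ j ∈ Finset.Iio k, ΔT j (X k) ≤ Et k (∑ j ∈ Finset.Ici k, ΔT j (X j)) := by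
    intro m
    induction m with
    | zero =>
      intro k hk
      have hIci : Finset.Ici k = {k} := by
        ext j
        simp only [Finset.mem_Ici, Finset.mem_singleton]
        constructor
        · intro h
          have hj := j.isLt
          exact le_antisymm (Fin.le_def.mpr (by rw [Fin.le_def] at h; omega)) h
        · rintro rfl; exact le_refl _
      refine le_of_eq ?_
      calc X k - ∑ j ∈ Finset.Iio k, ΔT j (X k)
          = ∑ j ∈ Finset.Ici k, ΔT j (X k) := by
            rw [sub_eq_iff_eq_add']
            exact ((hIioIci k fun j => ΔT j (X k)).trans (hTsum (X k))).symm
      _ = ΔT k (X k) := by rw [hIci, Finset.sum_singleton]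
      _ = ΔT k (Et k (X k)) := by rw [hadapt]
      _ = Et k (ΔT k (X k)) := hTcomm k (X k)
      _ = Et k (∑ j ∈ Finset.Ici k, ΔT j (X j)) := by rw [hIci, Finset.sum_singleton]
    | succ m ih =>
      intro k hk
      have hk1 : (k : ℕ) + 1 < N := by omega
      set k' : Fin N := ⟨(k : ℕ) + 1, hk1⟩ with hk'def
      have hk'v : (k' : ℕ) = (k : ℕ) + 1 := rfl
      have hkk' : k ≤ k' := by rw [Fin.le_def, hk'v]; omega
      have IH := ih k' (by rw [hk'v]; omega)
      have hIcik : Finset.Ici k = insert k (Finset.Ici k') := by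
        ext j
        simp only [Finset.mem_Ici, Finset.mem_insert, Fin.le_def, hk'v, Fin.ext_iff]
        omega
      have hknot : k ∉ Finset.Ici k' := by
        simp only [Finset.mem_Ici, Fin.le_def, hk'v]
        omega
      have hIiok' : Finset.Iio k' = insert k (Finset.Iio k) := by
        ext j
        simp only [Finset.mem_Iio, Finset.mem_insert, Fin.lt_def, hk'v, Fin.ext_iff]
        omega
      have hIioknot : k ∉ Finset.Iio k := by simp
      set A : E := ∑ j ∈ Finset.Ici k', ΔT j (X j) with hA
      -- step 4 : pull Et k through the sum
      have step4 : Et k (X k' - ∑ j ∈ Finset.Iio k', ΔT j (X k'))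
          = Et k (X k') - ∑ j ∈ Finset.Iio k', ΔT j (Et k (X k')) := by
        rw [map_sub, map_sum]
        congr 1
        refine Finset.sum_congr rfl fun j hj => ?_
        have hjk : j ≤ k := by
          have := Finset.mem_Iio.mp hj
          rw [Fin.le_def]; rw [Fin.lt_def, hk'v] at this; omega
        exact hTEt j k hjk (X k')
      -- step 5
      have hw : (0:E) ≤ Et k (X k') - X k := sub_nonneg.mpr (hsubmart k k' hkk')
      have step5 : X k - ∑ j ∈ Finset.Iio k', ΔT j (X k)
          ≤ Et k (X k') - ∑ j ∈ Finset.Iio k', ΔT j (Et k (X k')) := by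
        set w : E := Et k (X k') - X k with hwdef
        have h51 : (0:E) ≤ ∑ j ∈ Finset.Ici k', ΔT j w :=
          aux_sum_nonneg _ _ fun j _ => bp_pos (hΔT j) hw
        have h52 := hIioIci k' fun j => ΔT j w
        rw [hTsum w] at h52
        have h5 : ∑ j ∈ Finset.Iio k', ΔT j w ≤ w := by
          have := eq_sub_of_add_eq h52
          rw [this]
          exact sub_le_self _ h51
        have hsum : ∑ j ∈ Finset.Iio k', ΔT j (Et k (X k')) - ∑ j ∈ Finset.Iio k', ΔT j (X k)
            = ∑ j ∈ Finset.Iio k', ΔT j w := by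
          rw [← Finset.sum_sub_distrib]
          exact Finset.sum_congr rfl fun j _ => (map_sub (ΔT j) _ _).symm
        have key : (Et k (X k') - ∑ j ∈ Finset.Iio k', ΔT j (Et k (X k')))
            - (X k - ∑ j ∈ Finset.Iio k', ΔT j (X k))
            = w - ∑ j ∈ Finset.Iio k', ΔT j w := by
          rw [← hsum, hwdef]; abel
        have := sub_nonneg.mpr h5
        rw [← key] at this
        exact sub_nonneg.mp this
      calc X k - ∑ j ∈ Finset.Iio k, ΔT j (X k)
          = ΔT k (X k) + (X k - ∑ j ∈ Finset.Iio k', ΔT j (X k)) := by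
            rw [hIiok', Finset.sum_insert hIioknot]; abel
      _ ≤ ΔT k (X k) + (Et k (X k') - ∑ j ∈ Finset.Iio k', ΔT j (Et k (X k'))) :=
            add_le_add_right step5 _
      _ = ΔT k (X k) + Et k (X k' - ∑ j ∈ Finset.Iio k', ΔT j (X k')) := by rw [step4]
      _ ≤ ΔT k (X k) + Et k (Et k' A) :=
            add_le_add_right (ce_mono (hEt k) IH) _
      _ = ΔT k (X k) + Et k A := by rw [(hfiltr k k' hkk' A).1]
      _ = Et k (ΔT k (X k)) + Et k A := by
            rw [← hTcomm k (X k), hadapt]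
      _ = Et k (∑ j ∈ Finset.Ici k, ΔT j (X j)) := by
            rw [hIcik, Finset.sum_insert hknot, map_add]
  -- final assembly
  apply aux_sum_le_sum
  intro i _
  have hcomm : ∀ (j : Fin N) (x : E), ΔS i (ΔT j x) = ΔT j (ΔS i x) :=
    fun j x => bp_comm he (hΔS i) (hΔT j) x
  have h1 : ΔS i (∑ j, ΔT j (X j)) = ΔS i (∑ j ∈ Finset.Ici i, ΔT j (X j)) := by
    rw [map_sum, map_sum]
    have hz : ∑ j ∈ Finset.Iio i, ΔS i (ΔT j (X j)) = 0 :=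
      Finset.sum_eq_zero fun j hj => by
        rw [hcomm j (X j), hST i j (Finset.mem_Iio.mp hj) (X j)]
    rw [← hIioIci i fun j => ΔS i (ΔT j (X j)), hz, zero_add]
  have claim_i := claim (N - 1 - (i : ℕ)) i (by have := i.isLt; omega)
  have h2 : ΔS i (X i) = ΔS i (X i - ∑ j ∈ Finset.Iio i, ΔT j (X i)) := by
    rw [map_sub, map_sum]
    have hz : ∑ j ∈ Finset.Iio i, ΔS i (ΔT j (X i)) = 0 :=
      Finset.sum_eq_zero fun j hj => by
        rw [hcomm j (X i), hST i j (Finset.mem_Iio.mp hj) (X i)]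
    rw [hz, sub_zero]
  calc ΔS i (X i) = ΔS i (X i - ∑ j ∈ Finset.Iio i, ΔT j (X i)) := h2
  _ ≤ ΔS i (Et i (∑ j ∈ Finset.Ici i, ΔT j (X j))) := bp_mono (hΔS i) claim_i
  _ = Et i (ΔS i (∑ j ∈ Finset.Ici i, ΔT j (X j))) := hScomm i _
  _ = Et i (ΔS i (∑ j, ΔT j (X j))) := by rw [← h1]
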